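/- For all 0 < k < 2 and J > 0 there exists M₀ ∈ [0,∞) such that for every M > M₀ the strict inequality I^k_{M,J} < M holds. -/

import Mathlib

open MeasureTheory Real Filter Topology
open scoped ENNReal

noncomputable section

/-- Euclidean 3-space. -/
abbrev E3 := EuclideanSpace ℝ (Fin 3)

/-- `φ` belongs to (a C¹ surrogate of) the space `D¹(ℝ³)`: it is continuously
differentiable, its gradient is square integrable and it vanishes at infinity in
the sense that `{|φ| > a}` has finite measure for every `a > 0`. -/
def IsPotential (φ : E3 → ℝ) : Prop :=
  ContDiff ℝ 1 φ ∧ (∫⁻ x : E3, ENNReal.ofReal (‖gradient φ x‖ ^ 2)) < ⊤ ∧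
    ∀ a : ℝ, 0 < a → volume {x : E3 | a < |φ x|} < ⊤

/-- `f ∈ Γ^k_{M,J}`: `f` is measurable, a.e. nonnegative, with `‖f‖_{L¹} = M` and
`‖f‖_{L^{1+1/k}} ≤ J` (in particular `f ∈ L¹ ∩ L^{1+1/k}`). -/
def InGamma (k M J : ℝ) (f : E3 → E3 → ℝ) : Prop :=
  Measurable (Function.uncurry f) ∧
  (∀ᵐ z : E3 × E3, 0 ≤ f z.1 z.2) ∧
  (∫⁻ z : E3 × E3, ENNReal.ofReal (f z.1 z.2)) = ENNReal.ofReal M ∧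
  eLpNorm (Function.uncurry f) (ENNReal.ofReal (1 + 1/k)) volume ≤ ENNReal.ofReal J

/-- Kinetic energy `E_kin(f,φ) = ∫∫ √(e^{2φ(x)}+|p|²) f(x,p) dp dx` (value in `[0,∞]`). -/
def kinE (f : E3 → E3 → ℝ) (φ : E3 → ℝ) : ℝ≥0∞ :=
  ∫⁻ z : E3 × E3, ENNReal.ofReal (Real.sqrt (Real.exp (2 * φ z.1) + ‖z.2‖ ^ 2) * f z.1 z.2)

/-- Energy functional `𝓔(f,φ) = E_kin(f,φ) + (1/2)∫ |∇φ|²` (value in `[0,∞]`). -/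
def energy (f : E3 → E3 → ℝ) (φ : E3 → ℝ) : ℝ≥0∞ :=
  kinE f φ + (∫⁻ x : E3, ENNReal.ofReal (‖gradient φ x‖ ^ 2)) / 2

/-- `(f,φ)` is admissible: `f ∈ Γ^k_{M,J}`, `φ` is a potential and
`∫∫ √(1+|p|²) f dp dx < ∞`. -/
def Admissible (k M J : ℝ) (f : E3 → E3 → ℝ) (φ : E3 → ℝ) : Prop :=
  InGamma k M J f ∧ IsPotential φ ∧
  (∫⁻ z : E3 × E3, ENNReal.ofReal (Real.sqrt (1 + ‖z.2‖ ^ 2) * f z.1 z.2)) < ⊤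

/-- The energy infimum `I^k_{M,J} = inf {𝓔(f,φ) : (f,φ) admissible}`. -/
def energyInf (k M J : ℝ) : ℝ≥0∞ :=
  sInf { e : ℝ≥0∞ | ∃ f φ, Admissible k M J f φ ∧ e = energy f φ }

set_option synthInstance.maxHeartbeats 1000000
set_option maxHeartbeats 1000000

namespace EAux

def phiR (R : ℝ) (x : E3) : ℝ := -2 * Real.exp (-‖x‖ ^ 2 / R ^ 2)

lemma phiR_contDiff (R : ℝ) : ContDiff ℝ 1 (phiR R) :=
  contDiff_const.mul (Real.contDiff_exp.comp (((contDiff_norm_sq ℝ).neg).div_const _))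

lemma phiR_hasFDerivAt (R : ℝ) (x : E3) :
    HasFDerivAt (phiR R) ((-2 * (Real.exp (-‖x‖ ^ 2 / R ^ 2) * (-1 / R ^ 2))) •
      (2 • (innerSL ℝ x))) x := by
  have h1 : HasDerivAt (fun t : ℝ => -t / R ^ 2) (-1 / R ^ 2) (‖x‖ ^ 2) := by
    simpa using ((hasDerivAt_id (‖x‖ ^ 2)).neg.div_const (R ^ 2))
  have h2 : HasDerivAt (fun t : ℝ => -2 * Real.exp (-t / R ^ 2))
      (-2 * (Real.exp (-‖x‖ ^ 2 / R ^ 2) * (-1 / R ^ 2))) (‖x‖ ^ 2) :=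
    (h1.exp).const_mul (-2)
  exact h2.comp_hasFDerivAt (f := fun x : E3 => ‖x‖ ^ 2) x (hasStrictFDerivAt_norm_sq x).hasFDerivAt

lemma norm_gradient_phiR (R : ℝ) (hR : 0 < R) (x : E3) :
    ‖gradient (phiR R) x‖ ≤ 4 / R ^ 2 * Real.exp (-‖x‖ ^ 2 / R ^ 2) * ‖x‖ := by
  have hRne : R ≠ 0 := hR.ne'
  have hc : (-2 * (Real.exp (-‖x‖ ^ 2 / R ^ 2) * (-1 / R ^ 2)))
      = 2 / R ^ 2 * Real.exp (-‖x‖ ^ 2 / R ^ 2) := by field_simp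
  have hgrad : gradient (phiR R) x
      = (-2 * (Real.exp (-‖x‖ ^ 2 / R ^ 2) * (-1 / R ^ 2))) • (2 • x) := by
    show (InnerProductSpace.toDual ℝ E3).symm (fderiv ℝ (phiR R) x) = _
    rw [(phiR_hasFDerivAt R x).fderiv, _root_.map_smul, map_nsmul]
    congr 2
    have hx : innerSL ℝ x = InnerProductSpace.toDual ℝ E3 x := by
      ext y; simp [InnerProductSpace.toDual_apply_apply]
    rw [hx, LinearIsometryEquiv.symm_apply_apply]
  rw [hgrad, hc]
  calc ‖(2 / R ^ 2 * Real.exp (-‖x‖ ^ 2 / R ^ 2)) • (2 • x)‖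
      = (2 / R ^ 2 * Real.exp (-‖x‖ ^ 2 / R ^ 2)) * ‖(2 • x)‖ := by
        rw [norm_smul, Real.norm_eq_abs, abs_of_pos (by positivity)]
    _ ≤ (2 / R ^ 2 * Real.exp (-‖x‖ ^ 2 / R ^ 2)) * (2 * ‖x‖) := by
        apply mul_le_mul_of_nonneg_left _ (by positivity)
        rw [two_smul]
        calc ‖x + x‖ ≤ ‖x‖ + ‖x‖ := norm_add_le _ _
          _ = 2 * ‖x‖ := by ring
    _ = 4 / R ^ 2 * Real.exp (-‖x‖ ^ 2 / R ^ 2) * ‖x‖ := by ring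

lemma sq_norm_gradient_phiR (R : ℝ) (hR : 0 < R) (x : E3) :
    ‖gradient (phiR R) x‖ ^ 2 ≤ 16 / R ^ 2 * Real.exp (-‖x‖ ^ 2 / R ^ 2) := by
  have h := norm_gradient_phiR R hR x
  have hR2 : (0:ℝ) < R ^ 2 := by positivity
  set t : ℝ := ‖x‖ ^ 2 / R ^ 2 with ht
  have htn : 0 ≤ t := by positivity
  have hte : t ≤ Real.exp t := by nlinarith [Real.add_one_le_exp t]
  have hxt : -‖x‖ ^ 2 / R ^ 2 = -t := by rw [ht]; ring
  have he : (0:ℝ) < Real.exp (-t) := Real.exp_pos _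
  have hkey : Real.exp (-t) * ‖x‖ ^ 2 ≤ R ^ 2 := by
    have h1 : Real.exp (-t) * t ≤ 1 := by
      rw [Real.exp_neg, inv_mul_le_iff₀ (Real.exp_pos t)]
      linarith
    have h2 : ‖x‖ ^ 2 = t * R ^ 2 := by rw [ht]; field_simp
    calc Real.exp (-t) * ‖x‖ ^ 2 = (Real.exp (-t) * t) * R ^ 2 := by rw [h2]; ring
      _ ≤ 1 * R ^ 2 := by nlinarith
      _ = R ^ 2 := one_mul _
  have hn : (0:ℝ) ≤ ‖gradient (phiR R) x‖ := norm_nonneg _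
  rw [hxt] at h ⊢
  calc ‖gradient (phiR R) x‖ ^ 2 ≤ (4 / R ^ 2 * Real.exp (-t) * ‖x‖) ^ 2 :=
        pow_le_pow_left₀ hn h 2
    _ = 16 / R ^ 2 * Real.exp (-t) * (Real.exp (-t) * ‖x‖ ^ 2) / R ^ 2 := by ring
    _ ≤ 16 / R ^ 2 * Real.exp (-t) := by
        rw [div_le_iff₀ hR2]
        nlinarith [mul_le_mul_of_nonneg_left hkey
          (show (0:ℝ) ≤ 16 / R ^ 2 * Real.exp (-t) by positivity)]

lemma integrable_gauss (b : ℝ) (hb : 0 < b) :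
    Integrable (fun x : E3 => Real.exp (-b * ‖x‖ ^ 2)) := by
  have h := (GaussianFourier.integrable_cexp_neg_mul_sq_norm_add
    (b := (b : ℂ)) (by simpa using hb) 0 (0 : E3)).norm
  apply h.congr
  filter_upwards with x
  rw [Complex.norm_exp]
  congr 1
  push_cast
  simp only [Complex.add_re, Complex.mul_re, Complex.neg_re, Complex.ofReal_re,
    Complex.neg_im, Complex.ofReal_im, ← Complex.ofReal_pow]
  simp [inner_zero_left]

lemma integral_gauss_le (R : ℝ) (hR : 0 < R) :
    ∫ x : E3, Real.exp (-(R ^ 2)⁻¹ * ‖x‖ ^ 2) ≤ 8 * R ^ 3 := by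
  have hb : (0:ℝ) < (R ^ 2)⁻¹ := by positivity
  rw [GaussianFourier.integral_rexp_neg_mul_sq_norm hb]
  have h3 : (Module.finrank ℝ E3 : ℝ) = 3 := by
    rw [finrank_euclideanSpace_fin]; norm_num
  rw [h3]
  have hπ : π / (R ^ 2)⁻¹ = π * R ^ 2 := by field_simp
  rw [hπ]
  have h1 : π * R ^ 2 ≤ (2 * R) ^ 2 * 1 := by nlinarith [Real.pi_le_four, sq_nonneg R]
  calc (π * R ^ 2) ^ ((3:ℝ) / 2) ≤ ((2 * R) ^ 2) ^ ((3:ℝ) / 2) := by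
        apply Real.rpow_le_rpow (by positivity) (by nlinarith) (by norm_num)
    _ = (2 * R) ^ ((2:ℝ) * (3 / 2)) := by
        rw [← Real.rpow_natCast (2 * R) 2, ← Real.rpow_mul (by positivity)]
        norm_num
    _ = 8 * R ^ 3 := by
        rw [show (2:ℝ) * (3/2) = ((3:ℕ):ℝ) by norm_num, Real.rpow_natCast]
        ring

lemma lintegral_gradsq_le (R : ℝ) (hR : 0 < R) :
    (∫⁻ x : E3, ENNReal.ofReal (‖gradient (phiR R) x‖ ^ 2)) ≤ ENNReal.ofReal (128 * R) := by
  have hb : (0:ℝ) < (R ^ 2)⁻¹ := by positivity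
  have hint : Integrable (fun x : E3 => 16 / R ^ 2 * Real.exp (-(R ^ 2)⁻¹ * ‖x‖ ^ 2)) :=
    (integrable_gauss _ hb).const_mul _
  have hmono : (∫⁻ x : E3, ENNReal.ofReal (‖gradient (phiR R) x‖ ^ 2))
      ≤ ∫⁻ x : E3, ENNReal.ofReal (16 / R ^ 2 * Real.exp (-(R ^ 2)⁻¹ * ‖x‖ ^ 2)) := by
    apply lintegral_mono
    intro x
    apply ENNReal.ofReal_le_ofReal
    have := sq_norm_gradient_phiR R hR x
    rwa [show -‖x‖ ^ 2 / R ^ 2 = -(R ^ 2)⁻¹ * ‖x‖ ^ 2 by ring] at this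
  refine hmono.trans ?_
  rw [← ofReal_integral_eq_lintegral_ofReal hint
    (Filter.Eventually.of_forall fun x => by positivity)]
  apply ENNReal.ofReal_le_ofReal
  rw [integral_const_mul]
  have h2 := integral_gauss_le R hR
  calc 16 / R ^ 2 * ∫ x : E3, Real.exp (-(R ^ 2)⁻¹ * ‖x‖ ^ 2)
      ≤ 16 / R ^ 2 * (8 * R ^ 3) := by
        apply mul_le_mul_of_nonneg_left h2 (by positivity)
    _ = 128 * R := by field_simp; ring

lemma phiR_tail (R a : ℝ) (hR : 0 < R) (ha : 0 < a) :
    volume {x : E3 | a < |phiR R x|} < ⊤ := by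
  have hsub : {x : E3 | a < |phiR R x|}
      ⊆ Metric.closedBall 0 (Real.sqrt (R ^ 2 * max (Real.log (2 / a)) 0)) := by
    intro x hx
    simp only [Set.mem_setOf_eq, phiR] at hx
    have he : (0:ℝ) < Real.exp (-‖x‖ ^ 2 / R ^ 2) := Real.exp_pos _
    have habs : |(-2 : ℝ) * Real.exp (-‖x‖ ^ 2 / R ^ 2)|
        = 2 * Real.exp (-‖x‖ ^ 2 / R ^ 2) := by
      rw [abs_mul]
      simp [abs_of_pos he]
    rw [habs] at hx
    have ha2 : 0 < a / 2 := by linarith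
    have hlt : a / 2 < Real.exp (-‖x‖ ^ 2 / R ^ 2) := by linarith
    have hlog : Real.log (a / 2) < -‖x‖ ^ 2 / R ^ 2 := by
      have := Real.log_lt_log ha2 hlt
      rwa [Real.log_exp] at this
    have hR2 : (0:ℝ) < R ^ 2 := by positivity
    have hx2 : ‖x‖ ^ 2 < R ^ 2 * Real.log (2 / a) := by
      have h2a : Real.log (2 / a) = -Real.log (a / 2) := by
        rw [← Real.log_inv]
        congr 1
        field_simp
      rw [h2a]
      have hmul := mul_lt_mul_of_pos_left hlog hR2
      have hcan : R ^ 2 * (-‖x‖ ^ 2 / R ^ 2) = -‖x‖ ^ 2 := by field_simp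
      rw [hcan] at hmul
      linarith
    have hx2' : ‖x‖ ^ 2 ≤ R ^ 2 * max (Real.log (2 / a)) 0 := by
      have := le_max_left (Real.log (2 / a)) 0
      nlinarith [hx2, hR2]
    rw [Metric.mem_closedBall, dist_zero_right]
    rw [show (‖x‖ : ℝ) = Real.sqrt (‖x‖ ^ 2) by rw [Real.sqrt_sq (norm_nonneg x)]]
    exact Real.sqrt_le_sqrt hx2'
  exact lt_of_le_of_lt (measure_mono hsub) measure_closedBall_lt_top

def S (R : ℝ) : Set (E3 × E3) := (Metric.ball (0:E3) R) ×ˢ (Metric.ball (0:E3) 4⁻¹)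

def fR (R ρ : ℝ) (x p : E3) : ℝ := (S R).indicator (fun _ => ρ) (x, p)

lemma hS (R : ℝ) : MeasurableSet (S R) :=
  measurableSet_ball.prod measurableSet_ball

lemma uncurry_fR (R ρ : ℝ) : Function.uncurry (fR R ρ) = (S R).indicator (fun _ => ρ) :=
  funext fun z => by cases z; rfl

lemma volume_S (R : ℝ) (hR : 0 ≤ R) :
    volume (S R) = ENNReal.ofReal (R ^ 3 * 4⁻¹ ^ 3
      * ((volume (Metric.ball (0:E3) 1)).toReal) ^ 2) := by
  have hfin : volume (Metric.ball (0:E3) 1) ≠ ⊤ := measure_ball_lt_top.ne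
  have hVr : volume (Metric.ball (0:E3) 1)
      = ENNReal.ofReal ((volume (Metric.ball (0:E3) 1)).toReal) :=
    (ENNReal.ofReal_toReal hfin).symm
  rw [S, Measure.volume_eq_prod, Measure.prod_prod,
    Measure.addHaar_ball volume (0:E3) hR,
    Measure.addHaar_ball volume (0:E3) (by norm_num : (0:ℝ) ≤ 4⁻¹),
    finrank_euclideanSpace_fin]
  rw [hVr, ← ENNReal.ofReal_mul (by positivity), ← ENNReal.ofReal_mul (by positivity),
    ← ENNReal.ofReal_mul (by positivity)]
  congr 1
  rw [ENNReal.toReal_ofReal ENNReal.toReal_nonneg]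
  ring

lemma mass_fR (R ρ : ℝ) (hρ : 0 ≤ ρ) :
    (∫⁻ z : E3 × E3, ENNReal.ofReal (fR R ρ z.1 z.2))
      = ENNReal.ofReal ρ * volume (S R) := by
  have heq : ∀ z : E3 × E3, ENNReal.ofReal (fR R ρ z.1 z.2)
      = (S R).indicator (fun _ => ENNReal.ofReal ρ) z := by
    intro ⟨x, p⟩
    by_cases h : (x, p) ∈ S R
    · simp [fR, Set.indicator_of_mem h]
    · simp [fR, Set.indicator_of_notMem h]
  simp_rw [heq]
  rw [lintegral_indicator (hS R), setLIntegral_const, mul_comm]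

lemma sqrt_bound (R : ℝ) (hR : 0 < R) {x p : E3}
    (hx : x ∈ Metric.ball (0:E3) R) (hp : p ∈ Metric.ball (0:E3) 4⁻¹) :
    Real.sqrt (Real.exp (2 * phiR R x) + ‖p‖ ^ 2) ≤ 3 / 4 := by
  have hxn : ‖x‖ < R := mem_ball_zero_iff.mp hx
  have hpn : ‖p‖ < 4⁻¹ := mem_ball_zero_iff.mp hp
  have h1 : (-1 : ℝ) ≤ -‖x‖ ^ 2 / R ^ 2 := by
    rw [neg_div, neg_le_neg_iff, div_le_one (by positivity)]
    nlinarith [norm_nonneg x]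
  have he1 : Real.exp (-1) ≤ Real.exp (-‖x‖ ^ 2 / R ^ 2) := Real.exp_le_exp.mpr h1
  have he3 : (1:ℝ) / 3 ≤ Real.exp (-1) := by
    rw [Real.exp_neg]
    have h2 : Real.exp 1 ≤ 3 := by nlinarith [Real.exp_one_lt_d9]
    have h3 : (0:ℝ) < Real.exp 1 := Real.exp_pos 1
    rw [div_le_iff₀ (by norm_num : (0:ℝ) < 3)]
    rw [inv_mul_eq_div, le_div_iff₀ h3]
    linarith
  have hphi : phiR R x ≤ -2 / 3 := by
    have := le_trans he3 he1
    unfold phiR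
    nlinarith
  have hexp2 : Real.exp (2 * phiR R x) ≤ 1 / 2 := by
    have h4 : 2 * phiR R x ≤ -(4/3 : ℝ) := by linarith
    have h5 : Real.exp (2 * phiR R x) ≤ Real.exp (-(4/3 : ℝ)) := Real.exp_le_exp.mpr h4
    have h6 : (2:ℝ) ≤ Real.exp (4/3) := by nlinarith [Real.add_one_le_exp (4/3 : ℝ)]
    have h7 : Real.exp (-(4/3:ℝ)) ≤ 1/2 := by
      rw [Real.exp_neg, inv_le_comm₀ (Real.exp_pos _) (by norm_num)]
      linarith
    linarith
  have hsum : Real.exp (2 * phiR R x) + ‖p‖ ^ 2 ≤ 9 / 16 := by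
    nlinarith [norm_nonneg p]
  calc Real.sqrt (Real.exp (2 * phiR R x) + ‖p‖ ^ 2) ≤ Real.sqrt (9/16) :=
        Real.sqrt_le_sqrt hsum
    _ = 3 / 4 := by
        rw [show (9:ℝ)/16 = (3/4) ^ 2 by norm_num, Real.sqrt_sq (by norm_num : (0:ℝ) ≤ 3/4)]

lemma kin_bound (R ρ : ℝ) (hR : 0 < R) (hρ : 0 ≤ ρ) :
    (∫⁻ z : E3 × E3, ENNReal.ofReal
        (Real.sqrt (Real.exp (2 * phiR R z.1) + ‖z.2‖ ^ 2) * fR R ρ z.1 z.2))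
      ≤ ENNReal.ofReal (3/4) * ∫⁻ z : E3 × E3, ENNReal.ofReal (fR R ρ z.1 z.2) := by
  rw [← lintegral_const_mul' _ _ ENNReal.ofReal_ne_top]
  apply lintegral_mono
  intro ⟨x, p⟩
  dsimp only
  rw [← ENNReal.ofReal_mul (by norm_num : (0:ℝ) ≤ 3/4)]
  apply ENNReal.ofReal_le_ofReal
  by_cases h : (x, p) ∈ S R
  · have hf : fR R ρ x p = ρ := Set.indicator_of_mem h _
    rw [hf]
    have hb := sqrt_bound R hR (Set.mem_prod.mp h).1 (Set.mem_prod.mp h).2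
    exact mul_le_mul_of_nonneg_right hb hρ
  · have hf : fR R ρ x p = 0 := Set.indicator_of_notMem h _
    rw [hf, mul_zero, mul_zero]

lemma aux2_bound (R ρ : ℝ) (hρ : 0 ≤ ρ) :
    (∫⁻ z : E3 × E3, ENNReal.ofReal (Real.sqrt (1 + ‖z.2‖ ^ 2) * fR R ρ z.1 z.2))
      ≤ ENNReal.ofReal 2 * ∫⁻ z : E3 × E3, ENNReal.ofReal (fR R ρ z.1 z.2) := by
  rw [← lintegral_const_mul' _ _ ENNReal.ofReal_ne_top]
  apply lintegral_mono
  intro ⟨x, p⟩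
  dsimp only
  rw [← ENNReal.ofReal_mul (by norm_num : (0:ℝ) ≤ 2)]
  apply ENNReal.ofReal_le_ofReal
  by_cases h : (x, p) ∈ S R
  · have hf : fR R ρ x p = ρ := Set.indicator_of_mem h _
    rw [hf]
    have hpn : ‖p‖ < 4⁻¹ := mem_ball_zero_iff.mp (Set.mem_prod.mp h).2
    have hb : Real.sqrt (1 + ‖p‖ ^ 2) ≤ 2 := by
      calc Real.sqrt (1 + ‖p‖ ^ 2) ≤ Real.sqrt 4 := by
            apply Real.sqrt_le_sqrt; nlinarith [norm_nonneg p]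
        _ = 2 := by
            rw [show (4:ℝ) = 2 ^ 2 by norm_num, Real.sqrt_sq (by norm_num : (0:ℝ) ≤ 2)]
    exact mul_le_mul_of_nonneg_right hb hρ
  · have hf : fR R ρ x p = 0 := Set.indicator_of_notMem h _
    rw [hf, mul_zero, mul_zero]

end EAux

open EAux

/-- for all `0 < k < 2` and `J > 0` there is `M₀ ∈ [0,∞)` such that
`I^k_{M,J} < M` for every `M > M₀`. -/
theorem energyInf_lt_mass_for_large_mass (k J : ℝ) (hk : 0 < k) (hk2 : k < 2) (hJ : 0 < J) :
    ∃ M₀ : ℝ, 0 ≤ M₀ ∧ ∀ M : ℝ, M₀ < M → energyInf k M J < ENNReal.ofReal M := by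
  have hV1top : volume (Metric.ball (0:E3) 1) ≠ ⊤ := measure_ball_lt_top.ne
  set V1 : ℝ := (volume (Metric.ball (0:E3) 1)).toReal with hV1
  have hV1pos : 0 < V1 :=
    ENNReal.toReal_pos (Metric.measure_ball_pos volume 0 one_pos).ne' hV1top
  have hJ1k : (0:ℝ) < J ^ (1+k) := Real.rpow_pos_of_pos hJ _
  set C : ℝ := (64 / (J ^ (1+k) * V1 ^ 2)) ^ ((1:ℝ)/3) with hC
  have hCpos : 0 < C := Real.rpow_pos_of_pos (by positivity) _
  refine ⟨max 1 ((256 * C) ^ (3 / (2-k))), le_trans zero_le_one (le_max_left _ _), ?_⟩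
  intro M hM
  have hM1 : 1 < M := lt_of_le_of_lt (le_max_left _ _) hM
  have hMpos : 0 < M := by linarith
  set ρ : ℝ := J ^ (1+k) * M ^ (-k) with hρdef
  have hρpos : 0 < ρ := mul_pos hJ1k (Real.rpow_pos_of_pos hMpos _)
  set R : ℝ := C * M ^ ((1+k)/3) with hRdef
  have hRpos : 0 < R := mul_pos hCpos (Real.rpow_pos_of_pos hMpos _)
  -- algebraic identities
  have hC3 : C ^ 3 = 64 / (J ^ (1+k) * V1 ^ 2) := by
    rw [hC, ← Real.rpow_natCast ((64 / (J ^ (1+k) * V1 ^ 2)) ^ ((1:ℝ)/3)) 3,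
      ← Real.rpow_mul (by positivity)]
    norm_num
  have hM3 : (M ^ ((1+k)/3)) ^ 3 = M ^ (1+k) := by
    rw [← Real.rpow_natCast (M ^ ((1+k)/3)) 3, ← Real.rpow_mul hMpos.le,
      show (1+k)/3 * ((3:ℕ):ℝ) = 1+k by push_cast; ring]
  have hR3 : R ^ 3 = 64 * M ^ (1+k) / (J ^ (1+k) * V1 ^ 2) := by
    rw [hRdef, mul_pow, hC3, hM3]; ring
  have hMk : M ^ (-k) * M ^ (1+k) = M := by
    rw [← Real.rpow_add hMpos, show -k + (1+k) = 1 by ring, Real.rpow_one]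
  have hmassR : ρ * (R ^ 3 * 4⁻¹ ^ 3 * V1 ^ 2) = M := by
    calc ρ * (R ^ 3 * 4⁻¹ ^ 3 * V1 ^ 2)
        = (J ^ (1+k) * M ^ (-k)) * ((64 * M ^ (1+k) / (J ^ (1+k) * V1 ^ 2))
            * 4⁻¹ ^ 3 * V1 ^ 2) := by rw [hρdef, hR3]
      _ = M ^ (-k) * M ^ (1+k) := by field_simp; ring
      _ = M := hMk
  have hvolS : volume (S R) = ENNReal.ofReal (R ^ 3 * 4⁻¹ ^ 3 * V1 ^ 2) :=
    volume_S R hRpos.le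
  have hmass : (∫⁻ z : E3 × E3, ENNReal.ofReal (fR R ρ z.1 z.2)) = ENNReal.ofReal M := by
    rw [mass_fR R ρ hρpos.le, hvolS, ← ENNReal.ofReal_mul hρpos.le, hmassR]
  -- eLpNorm bound
  have hqpos : (0:ℝ) < 1 + 1/k := by positivity
  have hq0 : (ENNReal.ofReal (1 + 1/k)) ≠ 0 := (ENNReal.ofReal_pos.mpr hqpos).ne'
  have hqr : (ENNReal.ofReal (1 + 1/k)).toReal = 1 + 1/k := ENNReal.toReal_ofReal hqpos.le
  have hLp : eLpNorm (Function.uncurry (fR R ρ)) (ENNReal.ofReal (1 + 1/k)) volume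
      ≤ ENNReal.ofReal J := by
    rw [uncurry_fR, eLpNorm_indicator_const (hS R) hq0 ENNReal.ofReal_ne_top, hqr, hvolS]
    rw [Real.enorm_eq_ofReal hρpos.le,
      ENNReal.ofReal_rpow_of_nonneg (by positivity) (by positivity),
      ← ENNReal.ofReal_mul hρpos.le]
    apply ENNReal.ofReal_le_ofReal
    have hvol : R ^ 3 * 4⁻¹ ^ 3 * V1 ^ 2 = (M/J) ^ (1+k) := by
      rw [hR3, Real.div_rpow hMpos.le hJ.le]
      field_simp
      norm_num
    rw [hvol, ← Real.rpow_mul (by positivity),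
      show (1+k) * (1/(1+1/k)) = k by field_simp; ring,
      Real.div_rpow hMpos.le hJ.le]
    have hJk : (0:ℝ) < J ^ k := Real.rpow_pos_of_pos hJ _
    have hMk2 : (0:ℝ) < M ^ k := Real.rpow_pos_of_pos hMpos _
    have heq : ρ * (M ^ k / J ^ k) = J := by
      rw [hρdef, Real.rpow_neg hMpos.le,
        show (1:ℝ)+k = k+1 by ring, Real.rpow_add hJ, Real.rpow_one]
      field_simp
    rw [heq]
  -- admissibility
  have hnn : ∀ z : E3 × E3, 0 ≤ fR R ρ z.1 z.2 := by
    intro z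
    exact Set.indicator_apply_nonneg (fun _ => hρpos.le)
  have hmeas : Measurable (Function.uncurry (fR R ρ)) := by
    rw [uncurry_fR]; exact measurable_const.indicator (hS R)
  have hGamma : InGamma k M J (fR R ρ) :=
    ⟨hmeas, Filter.Eventually.of_forall hnn, hmass, hLp⟩
  have hpot : IsPotential (phiR R) :=
    ⟨phiR_contDiff R, lt_of_le_of_lt (lintegral_gradsq_le R hRpos) ENNReal.ofReal_lt_top,
      fun a ha => phiR_tail R a hRpos ha⟩
  have h3 : (∫⁻ z : E3 × E3, ENNReal.ofReal (Real.sqrt (1 + ‖z.2‖ ^ 2) * fR R ρ z.1 z.2)) < ⊤ := by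
    apply lt_of_le_of_lt (aux2_bound R ρ hρpos.le)
    rw [hmass]
    exact ENNReal.mul_lt_top ENNReal.ofReal_lt_top ENNReal.ofReal_lt_top
  have hAdm : Admissible k M J (fR R ρ) (phiR R) := ⟨hGamma, hpot, h3⟩
  -- energy bound
  have hRM : 256 * R < M := by
    have h2k : (0:ℝ) < (2-k)/3 := by linarith
    have h2ne : (2:ℝ) - k ≠ 0 := by linarith
    have e1 : ((256*C) ^ ((3:ℝ)/(2-k))) ^ ((2-k)/3) = 256*C := by
      rw [← Real.rpow_mul (by positivity), show (3:ℝ)/(2-k) * ((2-k)/3) = 1 by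
        field_simp [h2ne], Real.rpow_one]
    have e2 : 256*C ≤ (max 1 ((256*C) ^ ((3:ℝ)/(2-k)))) ^ ((2-k)/3) := by
      calc 256*C = ((256*C) ^ ((3:ℝ)/(2-k))) ^ ((2-k)/3) := e1.symm
        _ ≤ _ := Real.rpow_le_rpow (by positivity) (le_max_right _ _) h2k.le
    have e3 : (max 1 ((256*C) ^ ((3:ℝ)/(2-k)))) ^ ((2-k)/3) < M ^ ((2-k)/3) :=
      Real.rpow_lt_rpow (le_trans zero_le_one (le_max_left _ _)) hM h2k
    have e4 : M ^ ((2-k)/3) * M ^ ((1+k)/3) = M := by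
      rw [← Real.rpow_add hMpos, show (2-k)/3 + (1+k)/3 = 1 by ring, Real.rpow_one]
    have e5 : 256 * C < M ^ ((2-k)/3) := lt_of_le_of_lt e2 e3
    have e6 : 256 * C * M ^ ((1+k)/3) < M ^ ((2-k)/3) * M ^ ((1+k)/3) :=
      mul_lt_mul_of_pos_right e5 (Real.rpow_pos_of_pos hMpos _)
    rw [e4] at e6
    calc 256 * R = 256 * C * M ^ ((1+k)/3) := by rw [hRdef]; ring
      _ < M := e6
  have henergy : energy (fR R ρ) (phiR R) < ENNReal.ofReal M := by
    have hkin : kinE (fR R ρ) (phiR R) ≤ ENNReal.ofReal (3/4 * M) := by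
      unfold kinE
      apply le_trans (kin_bound R ρ hRpos hρpos.le)
      rw [hmass, ← ENNReal.ofReal_mul (by norm_num : (0:ℝ) ≤ 3/4)]
    have hgrad : (∫⁻ x : E3, ENNReal.ofReal (‖gradient (phiR R) x‖ ^ 2)) / 2
        ≤ ENNReal.ofReal (64 * R) := by
      have h1 := lintegral_gradsq_le R hRpos
      have h2 : ENNReal.ofReal (128 * R) / 2 = ENNReal.ofReal (64 * R) := by
        rw [show (128:ℝ) * R = 64 * R * 2 by ring,
          ENNReal.ofReal_mul (by positivity), ENNReal.ofReal_ofNat,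
          mul_div_assoc, ENNReal.div_self two_ne_zero ENNReal.ofNat_ne_top, mul_one]
      rw [← h2]
      exact ENNReal.div_le_div_right h1 2
    calc energy (fR R ρ) (phiR R)
        ≤ ENNReal.ofReal (3/4 * M) + ENNReal.ofReal (64 * R) := add_le_add hkin hgrad
      _ = ENNReal.ofReal (3/4 * M + 64 * R) := by
          rw [← ENNReal.ofReal_add (by positivity) (by positivity)]
      _ < ENNReal.ofReal M := by
          rw [ENNReal.ofReal_lt_ofReal_iff hMpos]
          linarith
  apply lt_of_le_of_lt _ henergy
  apply sInf_le
  exact ⟨fR R ρ, phiR R, hAdm, rfl⟩
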